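/- Let V be a vector space of dimension r+1 over an infinite field, equipped with two decreasing chains of subspaces V = W_0 ⊇ ⋯ ⊇ W_{d+1} = {0} and V = U_0 ⊇ ⋯ ⊇ U_{d+1} = {0}, each with one-step dimension drops at most 1. Let a_0 < a_1 < ⋯ < a_r be the orders attained with respect to (W_i) and b_0 < ⋯ < b_r the orders attained with respect to (U_i). Then there exist a basis s_0, …, s_r of V and a permutation σ of {0, …, r} such that ord_W(s_i) = a_i and ord_U(s_i) = b_{σ(i)} for all i. -/

import Mathlib

open Module
section helpers
variable {k V : Type*} [Field k] [AddCommGroup V] [Module k V]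

lemma chain_mono' (S : ℕ → Submodule k V) (h : ∀ j, S (j+1) ≤ S j) :
    ∀ p q, p ≤ q → S q ≤ S p := by
  intro p q hpq
  induction q with
  | zero => simpa [Nat.le_zero.mp hpq] using le_rfl
  | succ q ih =>
    rcases Nat.lt_or_ge p (q+1) with h1 | h1
    · exact le_trans (h q) (ih (by omega))
    · have : p = q + 1 := by omega
      simp [this]

lemma chain_ge [FiniteDimensional k V] (S : ℕ → Submodule k V)
    (hmono : ∀ j, S (j+1) ≤ S j) :
    ∀ q p, p ≤ q → (∀ j, p ≤ j → j < q → S (j+1) ≠ S j) →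
      finrank k (S q) + (q - p) ≤ finrank k (S p) := by
  intro q
  induction q with
  | zero =>
    intro p hp _
    obtain rfl : p = 0 := Nat.le_zero.mp hp
    simp
  | succ q ih =>
    intro p hp hstrict
    rcases Nat.lt_or_ge p (q+1) with h1 | h1
    · have h2 := ih p (by omega) (fun j hj hj' => hstrict j hj (by omega))
      have h3 : S (q+1) < S q :=
        lt_of_le_of_ne (hmono q) (hstrict q (by omega) (by omega))
      have h4 := Submodule.finrank_lt_finrank_of_lt h3
      omega
    · obtain rfl : p = q + 1 := by omega
      simp

lemma chain_le (e : ℕ → ℕ) :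
    ∀ q p, p ≤ q → (∀ j, p ≤ j → j < q → e j ≤ e (j+1) + 1) → e p ≤ e q + (q - p) := by
  intro q
  induction q with
  | zero => intro p hp _; simp [Nat.le_zero.mp hp]
  | succ q ih =>
    intro p hp hsub
    rcases Nat.lt_or_ge p (q+1) with h1 | h1
    · have h2 := ih p (by omega) (fun j hj hj' => hsub j hj (by omega))
      have h3 := hsub q (by omega) (by omega)
      omega
    · have : p = q + 1 := by omega
      simp [this]

lemma flag_finrank [FiniteDimensional k V] (r : ℕ) (S : ℕ → Submodule k V)
    (hmono : ∀ j, S (j+1) ≤ S j) (h0 : finrank k (S 0) = r + 1)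
    (hlast : S (r+1) = ⊥) (hstrict : ∀ j ≤ r, S (j+1) ≠ S j) :
    ∀ j ≤ r + 1, finrank k (S j) = r + 1 - j := by
  intro j hj
  have h1 := chain_ge S hmono (r+1) j hj (fun i hi hi' => hstrict i (by omega))
  have h2 := chain_ge S hmono j 0 (by omega) (fun i hi hi' => hstrict i (by omega))
  rw [hlast] at h1
  simp [finrank_bot] at h1
  omega

lemma const_of_no_drop {α : Type*} {d : ℕ} (W : Fin (d+2) → α) (D : Fin (d+1) → Prop)
    (h : ∀ t, ¬ D t → W t.castSucc = W t.succ) :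
    ∀ n : ℕ, ∀ p q : Fin (d+2), (q : ℕ) = (p : ℕ) + n →
      (∀ t : Fin (d+1), p ≤ t.castSucc → t.succ ≤ q → ¬ D t) → W p = W q := by
  intro n
  induction n with
  | zero =>
    intro p q hq _
    congr 1
    exact Fin.ext (by omega)
  | succ n ih =>
    intro p q hq hno
    have hp : (p : ℕ) < d + 1 := by have := q.isLt; omega
    set t : Fin (d+1) := ⟨p, hp⟩ with ht
    have hcs : t.castSucc = p := Fin.ext rfl
    have htv : ((t.castSucc : Fin (d+2)) : ℕ) = (t : ℕ) := rfl
    have h1 : W p = W t.succ := by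
      rw [← hcs]
      exact h t (hno t (by rw [hcs]) (by
        simp only [Fin.le_def, Fin.val_succ]
        omega))
    rw [h1]
    exact ih t.succ q (by simp only [Fin.val_succ]; omega)
      (fun u hu1 hu2 => hno u (by
        simp only [Fin.le_def, Fin.val_succ, Fin.coe_castSucc] at hu1 ⊢
        omega) hu2)

end helpers

lemma flag_lemma {k V : Type*} [Field k] [AddCommGroup V] [Module k V]
    [FiniteDimensional k V] :
    ∀ (r : ℕ) (F G : ℕ → Submodule k V),
    (∀ j, F (j+1) ≤ F j) → (∀ j, G (j+1) ≤ G j) →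
    F 0 = G 0 → Module.finrank k (F 0) = r + 1 →
    F (r+1) = ⊥ → G (r+1) = ⊥ →
    (∀ j ≤ r, F (j+1) ≠ F j) → (∀ j ≤ r, G (j+1) ≠ G j) →
    ∃ s : Fin (r+1) → V, LinearIndependent k s ∧
      ∃ σ : Fin (r+1) → ℕ, (∀ i, σ i ≤ r) ∧ Function.Injective σ ∧
      ∀ i : Fin (r+1), (s i ∈ F (i : ℕ) ∧ s i ∉ F ((i : ℕ)+1)) ∧
        (s i ∈ G (σ i) ∧ s i ∉ G (σ i + 1)) := by
  intro r
  induction r with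
  | zero =>
    intro F G hFmono hGmono hFG h0 hFlast hGlast hFstrict hGstrict
    classical
    have hne : F 0 ≠ ⊥ := by
      intro h
      rw [h, finrank_bot] at h0
      omega
    obtain ⟨x, hxF, hx0⟩ := Submodule.exists_mem_ne_zero_of_ne_bot hne
    haveI : Unique (Fin (0+1)) := inferInstanceAs (Unique (Fin 1))
    refine ⟨fun _ => x, linearIndependent_unique_iff.mpr hx0, fun _ => 0, fun _ => le_rfl,
      fun i j _ => Subsingleton.elim i j, ?_⟩
    intro i
    have hi : (i : ℕ) = 0 := by omega
    rw [hi]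
    refine ⟨⟨hxF, ?_⟩, ⟨by rwa [← hFG], ?_⟩⟩
    · rw [hFlast]; simpa using hx0
    · rw [hGlast]; simpa using hx0
  | succ n IH =>
    intro F G hFmono hGmono hFG h0 hFlast hGlast hFstrict hGstrict
    classical
    have h0' : finrank k (F 0) = n + 2 := by omega
    have hFlast' : F (n+2) = ⊥ := hFlast
    have hGlast' : G (n+2) = ⊥ := hGlast
    have hFrank : ∀ j ≤ n + 2, finrank k (F j) = n + 2 - j := by
      intro j hj
      have := flag_finrank (n+1) F hFmono h0 hFlast hFstrict j hj
      omega
    have hGrank : ∀ j ≤ n + 2, finrank k (G j) = n + 2 - j := by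
      intro j hj
      have := flag_finrank (n+1) G hGmono (by rw [← hFG]; exact h0) hGlast hGstrict j hj
      omega
    set G' : ℕ → Submodule k V := fun j => G j ⊓ F 1 with hG'def
    have hF1le : F 1 ≤ G 0 := by rw [← hFG]; exact hFmono 0
    have hd0 : finrank k (G' 0) = n + 1 := by
      have h1 : G' 0 = F 1 := inf_eq_right.mpr hF1le
      rw [h1]
      have := hFrank 1 (by omega)
      omega
    have hG'mono : ∀ j, G' (j+1) ≤ G' j := fun j => inf_le_inf_right _ (hGmono j)
    have hG'bot : G' (n+2) = ⊥ := by
      show G (n+2) ⊓ F 1 = ⊥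
      rw [hGlast', bot_inf_eq]
    have hdlast : finrank k (G' (n+2)) = 0 := by rw [hG'bot, finrank_bot]
    have hdsub : ∀ j ≤ n + 1, finrank k (G' j) ≤ finrank k (G' (j+1)) + 1 := by
      intro j hj
      have key := Submodule.finrank_sup_add_finrank_inf_eq (G (j+1)) (G j ⊓ F 1)
      have h1 : G (j+1) ⊓ (G j ⊓ F 1) = G' (j+1) := by
        show _ = G (j+1) ⊓ F 1
        rw [← inf_assoc, inf_eq_left.mpr (hGmono j)]
      have h2 : G (j+1) ⊔ (G j ⊓ F 1) ≤ G j := sup_le (hGmono j) inf_le_left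
      have h3 := Submodule.finrank_mono h2
      have h4 := hGrank j (by omega)
      have h5 := hGrank (j+1) (by omega)
      rw [h1] at key
      have h6 : finrank k (G' j) = finrank k ((G j ⊓ F 1 : Submodule k V)) := rfl
      omega
    have hex : ∃ j, G' j = G' (j+1) := by
      by_contra hcon
      push_neg at hcon
      have := chain_ge G' hG'mono (n+2) 0 (by omega)
        (fun j _ _ => fun h => hcon j h.symm)
      omega
    obtain ⟨t, ht_eq, ht_min⟩ : ∃ t, G' t = G' (t+1) ∧ ∀ j < t, G' j ≠ G' (j+1) :=
      ⟨Nat.find hex, Nat.find_spec hex, fun j hj => Nat.find_min hex hj⟩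
    have ht_le : t ≤ n + 1 := by
      by_contra hcon
      push_neg at hcon
      have := chain_ge G' hG'mono (n+2) 0 (by omega)
        (fun j _ hj => fun h => ht_min j (by omega) h.symm)
      omega
    have hdt : finrank k (G' (t+1)) = n + 1 - t := by
      have h1 := chain_le (fun j => finrank k (G' j)) t 0 (by omega)
        (fun j _ hj => hdsub j (by omega))
      have h2 : finrank k (G' (t+1)) = finrank k (G' t) := by rw [ht_eq]
      have h3 := chain_le (fun j => finrank k (G' j)) (n+2) (t+1) (by omega)
        (fun j hj hj' => hdsub j (by omega))
      omega
    have hdgt : ∀ j, t + 1 ≤ j → j ≤ n + 2 → finrank k (G' j) = n + 2 - j := by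
      intro j h1 h2
      have hup := chain_le (fun j => finrank k (G' j)) (n+2) j (by omega)
        (fun i hi hi' => hdsub i (by omega))
      have hlow := chain_le (fun j => finrank k (G' j)) j (t+1) (by omega)
        (fun i hi hi' => hdsub i (by omega))
      omega
    have hGt_lt : G (t+1) < G t :=
      lt_of_le_of_ne (hGmono t) (hGstrict t (by omega))
    obtain ⟨s0, hs0t, hs0t1⟩ := SetLike.exists_of_lt hGt_lt
    have hs0F1 : s0 ∉ F 1 := by
      intro h
      have h2 : s0 ∈ G' t := ⟨hs0t, h⟩
      rw [ht_eq] at h2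
      exact hs0t1 h2.1
    have hs0F0 : s0 ∈ F 0 := by
      rw [hFG]
      exact chain_mono' G hGmono 0 t (by omega) hs0t
    -- IH data
    set G'' : ℕ → Submodule k V := fun j => if j ≤ t then G' j else G' (j+1) with hG''def
    have hG''le : ∀ j, j ≤ t → G'' j = G' j := by
      intro j h
      show (if j ≤ t then G' j else G' (j+1)) = G' j
      rw [if_pos h]
    have hG''gt : ∀ j, t < j → G'' j = G' (j+1) := by
      intro j h
      show (if j ≤ t then G' j else G' (j+1)) = G' (j+1)
      rw [if_neg (by omega)]
    have hG''mono : ∀ j, G'' (j+1) ≤ G'' j := by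
      intro j
      rcases Nat.lt_or_ge t (j+1) with h1 | h1
      · rw [hG''gt (j+1) h1]
        rcases Nat.lt_or_ge t j with h2 | h2
        · rw [hG''gt j h2]; exact hG'mono (j+1)
        · have : j = t := by omega
          rw [this, hG''le t le_rfl]
          exact le_trans (hG'mono (t+1)) (hG'mono t)
      · rw [hG''le (j+1) h1, hG''le j (by omega)]
        exact hG'mono j
    have hG''rank : ∀ j, t ≤ j → j ≤ n + 1 → finrank k (G'' j) = n + 1 - j := by
      intro j h1 h2
      rcases Nat.lt_or_ge t j with h | h
      · rw [hG''gt j h]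
        have := hdgt (j+1) (by omega) (by omega)
        omega
      · obtain rfl : j = t := by omega
        rw [hG''le j le_rfl, ht_eq]
        omega
    obtain ⟨s', hli', σ', hσ'le, hσ'inj, hmem'⟩ :=
      IH (fun j => F (j+1)) G''
        (fun j => hFmono (j+1)) hG''mono
        (by
          rw [hG''le 0 (Nat.zero_le t)]
          show F 1 = G 0 ⊓ F 1
          exact (inf_eq_right.mpr hF1le).symm)
        (by
          show finrank k (F 1) = n + 1
          have := hFrank 1 (by omega)
          omega)
        hFlast'
        (by
          rcases Nat.lt_or_ge t (n+1) with h | h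
          · rw [hG''gt (n+1) h, hG'bot]
          · have ht : t = n + 1 := by omega
            rw [hG''le (n+1) (by omega), ← ht, ht_eq, ht, hG'bot])
        (fun j hj => hFstrict (j+1) (by omega))
        (by
          intro j hj
          rcases Nat.lt_or_ge j t with hlt | hge
          · rw [hG''le (j+1) (by omega), hG''le j (by omega)]
            exact fun h => ht_min j hlt h.symm
          · intro hcon
            have e1 : finrank k (G'' (j+1)) = n - j := by
              have := hG''rank (j+1) (by omega) (by omega)
              omega
            have e2 : finrank k (G'' j) = n + 1 - j := hG''rank j hge (by omega)
            rw [hcon] at e1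
            omega)
    have hs'F1 : ∀ i, s' i ∈ F 1 := by
      intro i
      have h1 := (hmem' i).1.1
      exact chain_mono' (fun j => F (j+1)) (fun j => hFmono (j+1)) 0 (i : ℕ) (by omega) h1
    refine ⟨Fin.cons s0 s', ?_, Fin.cons t (fun i => if σ' i < t then σ' i else σ' i + 1),
      ?_, ?_, ?_⟩
    · rw [linearIndependent_fin_cons]
      refine ⟨hli', fun hmem => hs0F1 ?_⟩
      have hsp : Submodule.span k (Set.range s') ≤ F 1 := by
        rw [Submodule.span_le]
        rintro x ⟨i, rfl⟩
        exact hs'F1 i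
      exact hsp hmem
    · intro i
      induction i using Fin.cases with
      | zero => simpa using ht_le
      | succ j =>
        simp only [Fin.cons_succ]
        have := hσ'le j
        split_ifs <;> omega
    · intro x y h
      induction x using Fin.cases with
      | zero =>
        induction y using Fin.cases with
        | zero => rfl
        | succ j =>
          exfalso
          simp only [Fin.cons_zero, Fin.cons_succ] at h
          split_ifs at h <;> omega
      | succ i =>
        induction y using Fin.cases with
        | zero =>
          exfalso
          simp only [Fin.cons_zero, Fin.cons_succ] at h
          split_ifs at h <;> omega
        | succ j =>
          simp only [Fin.cons_succ] at h
          have : σ' i = σ' j := by split_ifs at h <;> omega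
          rw [hσ'inj this]
    · intro i
      induction i using Fin.cases with
      | zero =>
        simp only [Fin.cons_zero, Fin.val_zero]
        exact ⟨⟨hs0F0, hs0F1⟩, hs0t, hs0t1⟩
      | succ j =>
        simp only [Fin.cons_succ, Fin.val_succ]
        obtain ⟨⟨hF1', hF2'⟩, hG1', hG2'⟩ := hmem' j
        refine ⟨⟨hF1', hF2'⟩, ?_, ?_⟩
        · split_ifs with hlt
          · rw [hG''le (σ' j) (by omega)] at hG1'
            exact hG1'.1
          · rcases Nat.lt_or_ge t (σ' j) with h | h
            · rw [hG''gt (σ' j) h] at hG1'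
              exact hG1'.1
            · obtain rfl : σ' j = t := by omega
              rw [hG''le (σ' j) le_rfl, ht_eq] at hG1'
              exact hG1'.1
        · split_ifs with hlt
          · intro hcon
            apply hG2'
            rw [hG''le (σ' j + 1) (by omega)]
            exact ⟨hcon, hs'F1 j⟩
          · intro hcon
            apply hG2'
            rw [hG''gt (σ' j + 1) (by omega)]
            exact ⟨hcon, hs'F1 j⟩

theorem stmt_6 {k V : Type*} [Field k] [Infinite k] [AddCommGroup V] [Module k V]
    (r d : ℕ) (hV : Module.finrank k V = r + 1)
    (W U : Fin (d + 2) → Submodule k V)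
    (hWmono : Antitone W) (hUmono : Antitone U)
    (hW0 : W 0 = ⊤) (hWlast : W (Fin.last (d + 1)) = ⊥)
    (hU0 : U 0 = ⊤) (hUlast : U (Fin.last (d + 1)) = ⊥)
    (hWdrop : ∀ i : Fin (d + 1),
      Module.finrank k (W i.castSucc) ≤ Module.finrank k (W i.succ) + 1)
    (hUdrop : ∀ i : Fin (d + 1),
      Module.finrank k (U i.castSucc) ≤ Module.finrank k (U i.succ) + 1)
    (a b : Fin (r + 1) → Fin (d + 1))
    (ha : StrictMono a) (hb : StrictMono b)
    (haW : {i : Fin (d + 1) | ∃ s : V, s ≠ 0 ∧ s ∈ W i.castSucc ∧ s ∉ W i.succ}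
      = Set.range a)
    (hbU : {i : Fin (d + 1) | ∃ s : V, s ≠ 0 ∧ s ∈ U i.castSucc ∧ s ∉ U i.succ}
      = Set.range b) :
    ∃ (s : Basis (Fin (r + 1)) k V) (σ : Equiv.Perm (Fin (r + 1))),
      ∀ i : Fin (r + 1),
        (s i ∈ W (a i).castSucc ∧ s i ∉ W (a i).succ) ∧
        (s i ∈ U (b (σ i)).castSucc ∧ s i ∉ U (b (σ i)).succ) := by
  classical
  haveI : FiniteDimensional k V := FiniteDimensional.of_finrank_pos (by omega)
  -- basic drop facts for W
  have hWdropeq : ∀ t : Fin (d+1), t ∉ Set.range a → W t.castSucc = W t.succ := by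
    intro t ht
    refine le_antisymm ?_ (hWmono (Fin.castSucc_le_succ t))
    intro x hx
    by_contra hxn
    apply ht
    rw [← haW]
    exact ⟨x, fun h => hxn (by rw [h]; exact Submodule.zero_mem _), hx, hxn⟩
  have hUdropeq : ∀ t : Fin (d+1), t ∉ Set.range b → U t.castSucc = U t.succ := by
    intro t ht
    refine le_antisymm ?_ (hUmono (Fin.castSucc_le_succ t))
    intro x hx
    by_contra hxn
    apply ht
    rw [← hbU]
    exact ⟨x, fun h => hxn (by rw [h]; exact Submodule.zero_mem _), hx, hxn⟩
  have hWex : ∀ t : Fin (d+1), t ∈ Set.range a →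
      ∃ s : V, s ≠ 0 ∧ s ∈ W t.castSucc ∧ s ∉ W t.succ := by
    intro t ht
    rw [← haW] at ht
    exact ht
  have hUex : ∀ t : Fin (d+1), t ∈ Set.range b →
      ∃ s : V, s ≠ 0 ∧ s ∈ U t.castSucc ∧ s ∉ U t.succ := by
    intro t ht
    rw [← hbU] at ht
    exact ht
  have hWconst : ∀ p q : Fin (d+2), p ≤ q →
      (∀ t : Fin (d+1), p ≤ t.castSucc → t.succ ≤ q → t ∉ Set.range a) → W p = W q := by
    intro p q hpq hno
    exact const_of_no_drop W (· ∈ Set.range a) hWdropeq ((q : ℕ) - (p : ℕ)) p q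
      (by rw [Fin.le_def] at hpq; omega) hno
  have hUconst : ∀ p q : Fin (d+2), p ≤ q →
      (∀ t : Fin (d+1), p ≤ t.castSucc → t.succ ≤ q → t ∉ Set.range b) → U p = U q := by
    intro p q hpq hno
    exact const_of_no_drop U (· ∈ Set.range b) hUdropeq ((q : ℕ) - (p : ℕ)) p q
      (by rw [Fin.le_def] at hpq; omega) hno
  -- ℕ-indexed versions of a, b
  set aa : ℕ → Fin (d+1) := fun j => a ⟨min j r, by omega⟩ with haadef
  set bb : ℕ → Fin (d+1) := fun j => b ⟨min j r, by omega⟩ with hbbdef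
  have haamem : ∀ j, aa j ∈ Set.range a := fun j => ⟨_, rfl⟩
  have hbbmem : ∀ j, bb j ∈ Set.range b := fun j => ⟨_, rfl⟩
  have haamono : ∀ p q, p ≤ q → aa p ≤ aa q := by
    intro p q h
    exact ha.monotone (by simp only [Fin.mk_le_mk]; omega)
  have hbbmono : ∀ p q, p ≤ q → bb p ≤ bb q := by
    intro p q h
    exact hb.monotone (by simp only [Fin.mk_le_mk]; omega)
  have haastrict : ∀ p q, p < q → q ≤ r → aa p < aa q := by
    intro p q h hq
    exact ha (by simp only [Fin.mk_lt_mk]; omega)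
  have hbbstrict : ∀ p q, p < q → q ≤ r → bb p < bb q := by
    intro p q h hq
    exact hb (by simp only [Fin.mk_lt_mk]; omega)
  -- the two flags
  set Fch : ℕ → Submodule k V := fun j => if j ≤ r then W (aa j).castSucc else ⊥
    with hFchdef
  set Gch : ℕ → Submodule k V := fun j => if j ≤ r then U (bb j).castSucc else ⊥
    with hGchdef
  have hFeq : ∀ j ≤ r, Fch j = W (aa j).castSucc := by
    intro j hj
    show (if j ≤ r then W (aa j).castSucc else ⊥) = _
    rw [if_pos hj]
  have hGeq : ∀ j ≤ r, Gch j = U (bb j).castSucc := by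
    intro j hj
    show (if j ≤ r then U (bb j).castSucc else ⊥) = _
    rw [if_pos hj]
  have hFbot : ∀ j, r < j → Fch j = ⊥ := by
    intro j hj
    show (if j ≤ r then W (aa j).castSucc else ⊥) = _
    rw [if_neg (by omega)]
  have hGbot : ∀ j, r < j → Gch j = ⊥ := by
    intro j hj
    show (if j ≤ r then U (bb j).castSucc else ⊥) = _
    rw [if_neg (by omega)]
  have haaval : ∀ (j : ℕ) (hj : j ≤ r), aa j = a ⟨j, by omega⟩ := by
    intro j hj
    simp only [haadef]
    congr 1
    simp only [Fin.mk.injEq]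
    omega
  have hbbval : ∀ (j : ℕ) (hj : j ≤ r), bb j = b ⟨j, by omega⟩ := by
    intro j hj
    simp only [hbbdef]
    congr 1
    simp only [Fin.mk.injEq]
    omega
  -- key linking equalities
  have hFsucc : ∀ j ≤ r, Fch (j+1) = W (aa j).succ := by
    intro j hj
    rcases Nat.lt_or_ge j r with hjr | hjr
    · rw [hFeq (j+1) (by omega)]
      refine (hWconst (aa j).succ (aa (j+1)).castSucc ?_ ?_).symm
      · have := haastrict j (j+1) (by omega) (by omega)
        rw [Fin.le_def]
        simp only [Fin.val_succ, Fin.coe_castSucc]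
        rw [Fin.lt_def] at this
        omega
      · rintro t h1 h2 ⟨i, hi⟩
        rw [Fin.le_def] at h1 h2
        simp only [Fin.val_succ, Fin.coe_castSucc] at h1 h2
        have hvi : ((a i : Fin (d+1)) : ℕ) = (t : ℕ) := congrArg Fin.val hi
        have hv1 : ((aa j : Fin (d+1)) : ℕ) = ((a ⟨j, by omega⟩ : Fin (d+1)) : ℕ) :=
          congrArg Fin.val (haaval j (by omega))
        have hv2 : ((aa (j+1) : Fin (d+1)) : ℕ) = ((a ⟨j+1, by omega⟩ : Fin (d+1)) : ℕ) :=
          congrArg Fin.val (haaval (j+1) (by omega))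
        have e1 : (⟨j, by omega⟩ : Fin (r+1)) < i :=
          ha.lt_iff_lt.mp (by rw [Fin.lt_def]; omega)
        have e2 : i < (⟨j+1, by omega⟩ : Fin (r+1)) :=
          ha.lt_iff_lt.mp (by rw [Fin.lt_def]; omega)
        rw [Fin.lt_def] at e1 e2
        simp only [] at e1 e2
        omega
    · rw [hFbot (j+1) (by omega)]
      have key : W (aa j).succ = W (Fin.last (d+1)) := by
        refine hWconst (aa j).succ (Fin.last (d+1)) (Fin.le_last _) ?_
        rintro t h1 _ ⟨i, hi⟩
        rw [Fin.le_def] at h1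
        simp only [Fin.val_succ, Fin.coe_castSucc] at h1
        have hvi : ((a i : Fin (d+1)) : ℕ) = (t : ℕ) := congrArg Fin.val hi
        have hv1 : ((aa j : Fin (d+1)) : ℕ) = ((a ⟨j, by omega⟩ : Fin (d+1)) : ℕ) :=
          congrArg Fin.val (haaval j hj)
        have e1 : (⟨j, by omega⟩ : Fin (r+1)) < i :=
          ha.lt_iff_lt.mp (by rw [Fin.lt_def]; omega)
        rw [Fin.lt_def] at e1
        simp only [] at e1
        have := i.isLt
        omega
      rw [key, hWlast]
  have hGsucc : ∀ j ≤ r, Gch (j+1) = U (bb j).succ := by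
    intro j hj
    rcases Nat.lt_or_ge j r with hjr | hjr
    · rw [hGeq (j+1) (by omega)]
      refine (hUconst (bb j).succ (bb (j+1)).castSucc ?_ ?_).symm
      · have := hbbstrict j (j+1) (by omega) (by omega)
        rw [Fin.le_def]
        simp only [Fin.val_succ, Fin.coe_castSucc]
        rw [Fin.lt_def] at this
        omega
      · rintro t h1 h2 ⟨i, hi⟩
        rw [Fin.le_def] at h1 h2
        simp only [Fin.val_succ, Fin.coe_castSucc] at h1 h2
        have hvi : ((b i : Fin (d+1)) : ℕ) = (t : ℕ) := congrArg Fin.val hi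
        have hv1 : ((bb j : Fin (d+1)) : ℕ) = ((b ⟨j, by omega⟩ : Fin (d+1)) : ℕ) :=
          congrArg Fin.val (hbbval j (by omega))
        have hv2 : ((bb (j+1) : Fin (d+1)) : ℕ) = ((b ⟨j+1, by omega⟩ : Fin (d+1)) : ℕ) :=
          congrArg Fin.val (hbbval (j+1) (by omega))
        have e1 : (⟨j, by omega⟩ : Fin (r+1)) < i :=
          hb.lt_iff_lt.mp (by rw [Fin.lt_def]; omega)
        have e2 : i < (⟨j+1, by omega⟩ : Fin (r+1)) :=
          hb.lt_iff_lt.mp (by rw [Fin.lt_def]; omega)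
        rw [Fin.lt_def] at e1 e2
        simp only [] at e1 e2
        omega
    · rw [hGbot (j+1) (by omega)]
      have key : U (bb j).succ = U (Fin.last (d+1)) := by
        refine hUconst (bb j).succ (Fin.last (d+1)) (Fin.le_last _) ?_
        rintro t h1 _ ⟨i, hi⟩
        rw [Fin.le_def] at h1
        simp only [Fin.val_succ, Fin.coe_castSucc] at h1
        have hvi : ((b i : Fin (d+1)) : ℕ) = (t : ℕ) := congrArg Fin.val hi
        have hv1 : ((bb j : Fin (d+1)) : ℕ) = ((b ⟨j, by omega⟩ : Fin (d+1)) : ℕ) :=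
          congrArg Fin.val (hbbval j hj)
        have e1 : (⟨j, by omega⟩ : Fin (r+1)) < i :=
          hb.lt_iff_lt.mp (by rw [Fin.lt_def]; omega)
        rw [Fin.lt_def] at e1
        simp only [] at e1
        have := i.isLt
        omega
      rw [key, hUlast]
  have hFtop : Fch 0 = ⊤ := by
    rw [hFeq 0 (by omega)]
    have key : W 0 = W (aa 0).castSucc := by
      refine hWconst 0 (aa 0).castSucc (Fin.zero_le _) ?_
      rintro t _ h2 ⟨i, hi⟩
      rw [Fin.le_def] at h2
      simp only [Fin.val_succ, Fin.coe_castSucc] at h2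
      have hvi : ((a i : Fin (d+1)) : ℕ) = (t : ℕ) := congrArg Fin.val hi
      have hv1 : ((aa 0 : Fin (d+1)) : ℕ) = ((a ⟨0, by omega⟩ : Fin (d+1)) : ℕ) :=
        congrArg Fin.val (haaval 0 (by omega))
      have e1 : i < (⟨0, by omega⟩ : Fin (r+1)) :=
        ha.lt_iff_lt.mp (by rw [Fin.lt_def]; omega)
      rw [Fin.lt_def] at e1
      simp only [] at e1
      omega
    rw [← key, hW0]
  have hGtop : Gch 0 = ⊤ := by
    rw [hGeq 0 (by omega)]
    have key : U 0 = U (bb 0).castSucc := by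
      refine hUconst 0 (bb 0).castSucc (Fin.zero_le _) ?_
      rintro t _ h2 ⟨i, hi⟩
      rw [Fin.le_def] at h2
      simp only [Fin.val_succ, Fin.coe_castSucc] at h2
      have hvi : ((b i : Fin (d+1)) : ℕ) = (t : ℕ) := congrArg Fin.val hi
      have hv1 : ((bb 0 : Fin (d+1)) : ℕ) = ((b ⟨0, by omega⟩ : Fin (d+1)) : ℕ) :=
        congrArg Fin.val (hbbval 0 (by omega))
      have e1 : i < (⟨0, by omega⟩ : Fin (r+1)) :=
        hb.lt_iff_lt.mp (by rw [Fin.lt_def]; omega)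
      rw [Fin.lt_def] at e1
      simp only [] at e1
      omega
    rw [← key, hU0]
  -- chain hypotheses
  have hFmono : ∀ j, Fch (j+1) ≤ Fch j := by
    intro j
    rcases Nat.lt_or_ge r (j+1) with h | h
    · rw [hFbot (j+1) h]; exact bot_le
    · rw [hFeq (j+1) (by omega), hFeq j (by omega)]
      exact hWmono (by
        rw [Fin.le_def]
        simp only [Fin.coe_castSucc]
        have := haamono j (j+1) (by omega)
        rw [Fin.le_def] at this
        omega)
  have hGmono : ∀ j, Gch (j+1) ≤ Gch j := by
    intro j
    rcases Nat.lt_or_ge r (j+1) with h | h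
    · rw [hGbot (j+1) h]; exact bot_le
    · rw [hGeq (j+1) (by omega), hGeq j (by omega)]
      exact hUmono (by
        rw [Fin.le_def]
        simp only [Fin.coe_castSucc]
        have := hbbmono j (j+1) (by omega)
        rw [Fin.le_def] at this
        omega)
  have hFstrict : ∀ j ≤ r, Fch (j+1) ≠ Fch j := by
    intro j hj hcon
    obtain ⟨x, hx0, hxin, hxout⟩ := hWex (aa j) (haamem j)
    apply hxout
    rw [← hFsucc j hj, hcon, hFeq j hj]
    exact hxin
  have hGstrict : ∀ j ≤ r, Gch (j+1) ≠ Gch j := by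
    intro j hj hcon
    obtain ⟨x, hx0, hxin, hxout⟩ := hUex (bb j) (hbbmem j)
    apply hxout
    rw [← hGsucc j hj, hcon, hGeq j hj]
    exact hxin
  -- apply the flag lemma
  obtain ⟨s, hli, σ0, hσ0le, hσ0inj, hmem⟩ :=
    flag_lemma r Fch Gch hFmono hGmono (hFtop.trans hGtop.symm)
      (by rw [hFtop, finrank_top, hV])
      (hFbot (r+1) (by omega)) (hGbot (r+1) (by omega))
      hFstrict hGstrict
  -- build the basis and the permutation
  have hcard : Fintype.card (Fin (r+1)) = finrank k V := by
    rw [Fintype.card_fin, hV]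
  refine ⟨basisOfLinearIndependentOfCardEqFinrank hli hcard, ?_⟩
  set σfin : Fin (r+1) → Fin (r+1) := fun i => ⟨σ0 i, by have := hσ0le i; omega⟩
    with hσfindef
  have hσfininj : Function.Injective σfin := by
    intro x y h
    apply hσ0inj
    have := congrArg Fin.val h
    exact this
  refine ⟨Equiv.ofBijective σfin (Finite.injective_iff_bijective.mp hσfininj), ?_⟩
  intro i
  rw [coe_basisOfLinearIndependentOfCardEqFinrank]
  obtain ⟨⟨hFin, hFout⟩, hGin, hGout⟩ := hmem i
  have hir : (i : ℕ) ≤ r := by omega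
  have haai : aa (i : ℕ) = a i := by
    rw [haaval (i : ℕ) hir]
  have hbbσ : bb (σ0 i) = b (σfin i) := by
    rw [hbbval (σ0 i) (hσ0le i)]
  constructor
  · constructor
    · rw [← haai, ← hFeq (i : ℕ) hir]
      exact hFin
    · rw [← haai, ← hFsucc (i : ℕ) hir]
      exact hFout
  · have hperm : (Equiv.ofBijective σfin (Finite.injective_iff_bijective.mp hσfininj)) i
        = σfin i := rfl
    rw [hperm]
    constructor
    · rw [← hbbσ, ← hGeq (σ0 i) (hσ0le i)]
      exact hGin
    · rw [← hbbσ, ← hGsucc (σ0 i) (hσ0le i)]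
      exact hGout
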